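/- Let s_0 < 0 and K > 0, and let Z : [s_0, 0) → ℝ be a differentiable function satisfying the differential inequality Z'(s) ≤ 2(Z(s) + s + 2K + 1)/s for every s ∈ [s_0, 0). Then there exists s ∈ [s_0, 0) with Z(s) < 0. (Equivalently: Z cannot remain nonnegative on all of [s_0, 0), since by comparison Z(s) ≤ −2K − 1 − 2s + C s² with C = (Z(s_0) + 2K + 1 + 2s_0)/s_0², and this bound tends to −2K − 1 < 0 as s → 0⁻.) -/

import Mathlib

/-- Key step of Lemma 2: if `s₀ < 0`, `K > 0`, and a differentiable function
`Z` on `[s₀, 0)` satisfies `Z'(s) ≤ 2(Z(s) + s + 2K + 1)/s` there, then `Z`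
takes a negative value somewhere in `[s₀, 0)`. -/
theorem exists_neg_of_diff_ineq (s₀ K : ℝ) (hs₀ : s₀ < 0) (hK : 0 < K)
    (Z Z' : ℝ → ℝ)
    (hderiv : ∀ s ∈ Set.Ico s₀ 0, HasDerivWithinAt Z (Z' s) (Set.Ico s₀ 0) s)
    (hineq : ∀ s ∈ Set.Ico s₀ 0, Z' s ≤ 2 * (Z s + s + 2 * K + 1) / s) :
    ∃ s ∈ Set.Ico s₀ (0 : ℝ), Z s < 0 := by
  by_contra hcon
  push_neg at hcon
  set u : ℝ → ℝ := fun s => Z s + 2 * s + (2 * K + 1) with hu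
  set g : ℝ → ℝ := fun s => u s / s ^ 2 with hg
  have hZder : ∀ s ∈ Set.Ioo s₀ (0:ℝ), HasDerivAt Z (Z' s) s := fun s hs =>
    (hderiv s (Set.Ioo_subset_Ico_self hs)).hasDerivAt (Ico_mem_nhds hs.1 hs.2)
  have huder : ∀ s ∈ Set.Ioo s₀ (0:ℝ), HasDerivAt u (Z' s + 2) s := by
    intro s hs
    have h1 : HasDerivAt (fun x : ℝ => 2 * x) 2 s := by
      simpa using (hasDerivAt_id s).const_mul 2
    exact ((hZder s hs).add h1).add_const (2 * K + 1)
  have hgder : ∀ s ∈ Set.Ioo s₀ (0:ℝ),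
      HasDerivAt g (((Z' s + 2) * s ^ 2 - u s * (2 * s)) / (s ^ 2) ^ 2) s := by
    intro s hs
    have hs0 : s ≠ 0 := ne_of_lt hs.2
    have h2 : HasDerivAt (fun x : ℝ => x ^ 2) (2 * s) s := by
      simpa using hasDerivAt_pow 2 s
    exact (huder s hs).div h2 (pow_ne_zero 2 hs0)
  have hderiv_nonpos : ∀ s ∈ Set.Ioo s₀ (0:ℝ), deriv g s ≤ 0 := by
    intro s hs
    rw [(hgder s hs).deriv]
    have hs0 : s < 0 := hs.2
    have hsne : s ≠ 0 := ne_of_lt hs0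
    have hZ' : Z' s ≤ 2 * (Z s + s + 2 * K + 1) / s :=
      hineq s (Set.Ioo_subset_Ico_self hs)
    -- numerator ≤ 0
    have hnum : (Z' s + 2) * s ^ 2 - u s * (2 * s) ≤ 0 := by
      have key : Z' s + 2 ≤ 2 * u s / s := by
        have heq : 2 * (Z s + s + 2 * K + 1) / s + 2 = 2 * u s / s := by
          field_simp [hu]; ring
        rw [← heq]; linarith
      have hs2 : (0:ℝ) < s ^ 2 := by positivity
      have heq2 : (2 * u s / s) * s ^ 2 = u s * (2 * s) := by
        field_simp
      have h5 := mul_le_mul_of_nonneg_right key (le_of_lt hs2)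
      rw [heq2] at h5
      linarith
    have hpos : (0:ℝ) < (s ^ 2) ^ 2 := by positivity
    exact div_nonpos_of_nonpos_of_nonneg hnum (le_of_lt hpos)
  have hucont : ContinuousOn u (Set.Ico s₀ 0) := by
    apply ContinuousOn.add
    apply ContinuousOn.add
    · exact fun s hs => (hderiv s hs).continuousWithinAt
    · exact (continuous_const.mul continuous_id).continuousOn
    · exact continuousOn_const
  have hgcont : ContinuousOn g (Set.Ico s₀ 0) := by
    apply hucont.div (continuous_pow 2).continuousOn
    intro s hs
    exact pow_ne_zero 2 (ne_of_lt hs.2)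
  have hanti : AntitoneOn g (Set.Ico s₀ 0) := by
    apply antitoneOn_of_deriv_nonpos (convex_Ico s₀ 0) hgcont
    · rw [interior_Ico]
      exact fun s hs => (hgder s hs).differentiableAt.differentiableWithinAt
    · rw [interior_Ico]
      exact hderiv_nonpos
  set C : ℝ := g s₀ with hC
  have hs₀mem : s₀ ∈ Set.Ico s₀ (0:ℝ) := ⟨le_refl _, hs₀⟩
  have hbound : ∀ s ∈ Set.Ico s₀ (0:ℝ), u s ≤ C * s ^ 2 := by
    intro s hs
    have := hanti hs₀mem hs hs.1
    have hs2 : (0:ℝ) < s ^ 2 := by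
      nlinarith [mul_pos (neg_pos.mpr hs.2) (neg_pos.mpr hs.2)]
    calc u s = g s * s ^ 2 := (div_mul_cancel₀ (u s) (ne_of_gt hs2)).symm
    _ ≤ C * s ^ 2 := mul_le_mul_of_nonneg_right this (le_of_lt hs2)
  -- choose s close to 0
  set m : ℝ := min (-s₀) ((2 * K + 1) / (|C| * (-s₀) + 2)) with hm
  have habs : (0:ℝ) ≤ |C| * (-s₀) := mul_nonneg (abs_nonneg _) (by linarith)
  have hden : (0:ℝ) < |C| * (-s₀) + 2 := by linarith
  have hmpos : 0 < m := lt_min (by linarith) (div_pos (by linarith) hden)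
  set s : ℝ := -m / 2 with hsdef
  have hm1 : m ≤ -s₀ := min_le_left _ _
  have hm2 : m ≤ (2 * K + 1) / (|C| * (-s₀) + 2) := min_le_right _ _
  have hm2' : (|C| * (-s₀) + 2) * m ≤ 2 * K + 1 := by
    rw [mul_comm]
    exact (le_div_iff₀ hden).mp hm2
  have hsmem : s ∈ Set.Ico s₀ (0:ℝ) := by
    constructor
    · rw [hsdef]; linarith
    · rw [hsdef]; linarith
  have hub := hbound s hsmem
  have hlb := hcon s hsmem
  -- Z s = u s - 2 s - (2K+1) ≤ C s² - 2 s - (2K+1)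
  have hZs : Z s ≤ C * s ^ 2 - 2 * s - (2 * K + 1) := by
    have : u s = Z s + 2 * s + (2 * K + 1) := rfl
    linarith
  have hCs : C * s ^ 2 ≤ |C| * (-s₀) * m / 4 := by
    have h1 : C ≤ |C| := le_abs_self C
    have h2 : s ^ 2 = m ^ 2 / 4 := by rw [hsdef]; ring
    have h3 : m ^ 2 ≤ m * (-s₀) := by nlinarith
    have h4 : (0:ℝ) ≤ |C| := abs_nonneg C
    rw [h2]
    nlinarith [sq_nonneg m]
  have hms : -2 * s = m := by rw [hsdef]; ring
  have hnn : (0:ℝ) ≤ |C| * (-s₀) * m := mul_nonneg habs (le_of_lt hmpos)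
  linarith [hlb, hZs, hCs, hm2', hmpos, hnn, hms]
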